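/- arXiv:2501.09545 — 2 statements merged into one kernel-verified Lean document; each statement's English description precedes it below -/
import Mathlib

section
/- Comparison lemma for liftings: Let F be a k-uniform family of subsets of [n], let ℓ ≥ 1, and let φ : binom([n],k) → binom([n]×[n], kℓ) be a proper lifting, meaning for every S and every i ∈ S, |φ(S) ∩ ({i}×[n])| = ℓ. Let {A_{i,j}}_{i∈[n],j∈[ℓ]} and {Ã_{i,j}}_{i,j∈[n]} be i.i.d. real random variables. Then E[sup_{S∈F} Σ_{(i,j)∈S×[ℓ]} A_{i,j}] ≤ E[sup_{S∈F} Σ_{(i,j)∈φ(S)} Ã_{i,j}]. -/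
open MeasureTheory ProbabilityTheory

section helpers
variable {D : Measure ℝ} [IsProbabilityMeasure D]

/-- Joint law of an i.i.d. family is the product measure. -/
lemma lift_map_eq_pi {Ω ι : Type*} [MeasurableSpace Ω] [Fintype ι] (μ : Measure Ω)
    [IsProbabilityMeasure μ] (X : ι → Ω → ℝ) (hmeas : ∀ i, Measurable (X i))
    (hindep : iIndepFun X μ) (hdist : ∀ i, μ.map (X i) = D) :
    μ.map (fun ω i => X i ω) = Measure.pi (fun _ : ι => D) := by
  refine (Measure.pi_eq fun s hs => ?_).symm
  rw [Measure.map_apply (measurable_pi_lambda _ hmeas) (MeasurableSet.univ_pi hs)]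
  have hpre : (fun ω i => X i ω) ⁻¹' Set.pi Set.univ s = ⋂ i, X i ⁻¹' s i := by
    ext ω; simp [Set.mem_pi]
  rw [hpre, hindep.meas_iInter (fun i => ⟨s i, hs i, rfl⟩)]
  exact Finset.prod_congr rfl fun i _ => by
    rw [← hdist i, Measure.map_apply (hmeas i) (hs i)]

/-- Pulling back along an injective reindexing preserves the i.i.d. product measure. -/
lemma map_comp_inj_pi {ι ι' : Type*} [Fintype ι] [Fintype ι'] (g : ι' → ι)
    (hg : Function.Injective g) :
    Measure.map (fun x : ι → ℝ => fun e => x (g e)) (Measure.pi fun _ : ι => D)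
      = Measure.pi (fun _ : ι' => D) := by
  classical
  refine (Measure.pi_eq fun s hs => ?_).symm
  have hm : Measurable (fun x : ι → ℝ => fun e : ι' => x (g e)) :=
    measurable_pi_lambda _ fun e => measurable_pi_apply _
  rw [Measure.map_apply hm (MeasurableSet.univ_pi hs)]
  set s' : ι → Set ℝ := fun i => if h : ∃ e, g e = i then s h.choose else Set.univ with hs'
  have hkey : ∀ e : ι', s' (g e) = s e := by
    intro e
    have h : ∃ e', g e' = g e := ⟨e, rfl⟩
    have := h.choose_spec
    simp only [s', dif_pos h, hg this]
  have hpre : (fun x : ι → ℝ => fun e => x (g e)) ⁻¹' Set.pi Set.univ s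
      = Set.pi Set.univ s' := by
    ext x
    simp only [Set.mem_preimage, Set.mem_pi, Set.mem_univ, true_imp_iff]
    constructor
    · intro hx i
      by_cases h : ∃ e, g e = i
      · obtain ⟨e, rfl⟩ := h; rw [hkey]; exact hx e
      · simp [s', dif_neg h]
    · intro hx e; have := hx (g e); rwa [hkey] at this
  rw [hpre, Measure.pi_pi]
  have h1 : ∏ i : ι, D (s' i) = ∏ i ∈ Finset.univ.image g, D (s' i) := by
    refine (Finset.prod_subset (Finset.subset_univ _) fun i _ hi => ?_).symm
    have : ¬ ∃ e, g e = i := by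
      intro ⟨e, he⟩; exact hi (Finset.mem_image.mpr ⟨e, Finset.mem_univ _, he⟩)
    simp [s', dif_neg this]
  rw [h1, Finset.prod_image (fun a _ b _ h => hg h)]
  exact Finset.prod_congr rfl fun e _ => by rw [hkey]

/-- The law of a coordinate under the i.i.d. product measure. -/
lemma map_eval_pi {ι : Type*} [Fintype ι] (e : ι) :
    Measure.map (fun x : ι → ℝ => x e) (Measure.pi fun _ : ι => D) = D := by
  classical
  refine Measure.ext fun s hs => ?_
  rw [Measure.map_apply (measurable_pi_apply e) hs]
  have hpre : (fun x : ι → ℝ => x e) ⁻¹' s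
      = Set.pi Set.univ (fun i => if i = e then s else Set.univ) := by
    ext x
    simp only [Set.mem_preimage, Set.mem_pi, Set.mem_univ, true_imp_iff]
    constructor
    · intro hx i; by_cases h : i = e <;> simp [h, hx]
    · intro hx; have := hx e; simpa using this
  rw [hpre, Measure.pi_pi, Finset.prod_eq_single e (fun b _ hb => by simp [hb]) (by simp)]
  simp

lemma integrable_eval_pi {ι : Type*} [Fintype ι] (hD : Integrable id D) (e : ι) :
    Integrable (fun x : ι → ℝ => x e) (Measure.pi fun _ : ι => D) := by
  have h := (integrable_map_measure aestronglyMeasurable_id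
    (measurable_pi_apply (a := e) (X := fun _ : ι => ℝ)).aemeasurable).mp
    (by rw [map_eval_pi (D := D) e]; exact hD)
  simpa using h

lemma integrable_sup' {ι κ : Type*} [MeasurableSpace κ] {ν : Measure κ} {s : Finset ι}
    (hs : s.Nonempty) (g : ι → κ → ℝ) (hg : ∀ i ∈ s, Integrable (g i) ν) :
    Integrable (fun x => s.sup' hs fun i => g i x) ν := by
  classical
  induction s using Finset.induction with
  | empty => exact absurd hs (by simp)
  | insert a s ha IH =>
    rcases s.eq_empty_or_nonempty with rfl | hs'
    · simpa using hg a (by simp)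
    · have : (fun x => (insert a s).sup' hs fun i => g i x)
          = fun x => g a x ⊔ s.sup' hs' fun i => g i x := by
        funext x; rw [Finset.sup'_insert]
      rw [this]
      exact (hg a (by simp)).sup (IH hs' fun i hi => hg i (by simp [hi]))

end helpers

section comb
variable {ι : Type*} [DecidableEq ι]

lemma sum_swap_of_mem_not_mem (x : ι → ℝ) {T : Finset ι} {p q : ι}
    (hp : p ∈ T) (hq : q ∉ T) :
    ∑ e ∈ T, x (Equiv.swap p q e) = ∑ e ∈ T, x e - x p + x q := by
  rw [← Finset.add_sum_erase _ (fun e => x (Equiv.swap p q e)) hp,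
    ← Finset.add_sum_erase _ x hp]
  have h2 : ∀ e ∈ T.erase p, x (Equiv.swap p q e) = x e := fun e he => by
    rw [Equiv.swap_apply_of_ne_of_ne (Finset.ne_of_mem_erase he)
      (fun h => hq (by rw [← h]; exact Finset.mem_of_mem_erase he))]
  rw [Finset.sum_congr rfl h2, Equiv.swap_apply_left]
  ring

lemma sum_swap_of_map (x : ι → ℝ) {T : Finset ι} {p q : ι}
    (h : ∀ e ∈ T, Equiv.swap p q e ∈ T) :
    ∑ e ∈ T, x (Equiv.swap p q e) = ∑ e ∈ T, x e := by
  have himg : T.image (Equiv.swap p q) = T :=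
    Finset.eq_of_subset_of_card_le (Finset.image_subset_iff.mpr h)
      (by rw [Finset.card_image_of_injective _ (Equiv.injective _)])
  conv_rhs => rw [← himg]
  rw [Finset.sum_image (fun a _ b _ hab => Equiv.injective _ hab)]

/-- The pointwise two-point symmetrization inequality. -/
lemma sup'_swap_ineq {α : Type*} {F : Finset α} (hF : F.Nonempty)
    (ψ ψ' : α → Finset ι) (p q : ι) (hpq : p ≠ q)
    (hψ' : ∀ S ∈ F, ψ' S
      = if p ∈ ψ S ∧ q ∉ ψ S then insert q ((ψ S).erase p) else ψ S)
    (x : ι → ℝ) :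
    (F.sup' hF fun S => ∑ e ∈ ψ' S, x e)
      + (F.sup' hF fun S => ∑ e ∈ ψ' S, x (Equiv.swap p q e))
    ≤ (F.sup' hF fun S => ∑ e ∈ ψ S, x e)
      + (F.sup' hF fun S => ∑ e ∈ ψ S, x (Equiv.swap p q e)) := by
  classical
  obtain ⟨S, hS, hSv⟩ := F.exists_mem_eq_sup' hF (fun S => ∑ e ∈ ψ' S, x e)
  obtain ⟨S', hS', hS'v⟩ :=
    F.exists_mem_eq_sup' hF (fun S => ∑ e ∈ ψ' S, x (Equiv.swap p q e))
  rw [hSv, hS'v]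
  have hsupa : ∀ T ∈ F, (∑ e ∈ ψ T, x e) ≤ F.sup' hF fun S => ∑ e ∈ ψ S, x e :=
    fun T hT => Finset.le_sup' (fun S => ∑ e ∈ ψ S, x e) hT
  have hsupb : ∀ T ∈ F, (∑ e ∈ ψ T, x (Equiv.swap p q e))
      ≤ F.sup' hF fun S => ∑ e ∈ ψ S, x (Equiv.swap p q e) :=
    fun T hT => Finset.le_sup' (fun S => ∑ e ∈ ψ S, x (Equiv.swap p q e)) hT
  -- structural facts about a single T
  have hfacts : ∀ T ∈ F,
      ((∑ e ∈ ψ' T, x e) = (∑ e ∈ ψ T, x e) + (x q - x p)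
          ∧ (∑ e ∈ ψ T, x (Equiv.swap p q e)) = (∑ e ∈ ψ T, x e) + (x q - x p)
          ∧ (∑ e ∈ ψ' T, x (Equiv.swap p q e)) = (∑ e ∈ ψ T, x e))
        ∨ ((∑ e ∈ ψ' T, x e) = (∑ e ∈ ψ T, x e)
          ∧ (∑ e ∈ ψ' T, x (Equiv.swap p q e)) = (∑ e ∈ ψ T, x (Equiv.swap p q e))
          ∧ ((∑ e ∈ ψ T, x (Equiv.swap p q e)) = (∑ e ∈ ψ T, x e)
            ∨ (∑ e ∈ ψ T, x (Equiv.swap p q e)) = (∑ e ∈ ψ T, x e) - (x q - x p))) := by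
    intro T hT
    by_cases hP : p ∈ ψ T ∧ q ∉ ψ T
    · left
      obtain ⟨hp, hq⟩ := hP
      have hψ'T : ψ' T = insert q ((ψ T).erase p) := by rw [hψ' T hT, if_pos ⟨hp, hq⟩]
      have hqe : q ∉ (ψ T).erase p := fun h => hq (Finset.mem_of_mem_erase h)
      have ha' : (∑ e ∈ ψ' T, x e) = (∑ e ∈ ψ T, x e) + (x q - x p) := by
        rw [hψ'T, Finset.sum_insert hqe, Finset.sum_erase_eq_sub hp]; ring
      refine ⟨ha', sum_swap_of_mem_not_mem x hp hq |>.trans (by ring), ?_⟩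
      have hpe : p ∉ ψ' T := by
        rw [hψ'T]
        simp only [Finset.mem_insert, Finset.mem_erase]
        push_neg
        exact ⟨hpq, fun h _ => (h rfl).elim⟩
      have hqe' : q ∈ ψ' T := by rw [hψ'T]; exact Finset.mem_insert_self _ _
      have : ∑ e ∈ ψ' T, x (Equiv.swap q p e)
          = ∑ e ∈ ψ' T, x e - x q + x p := sum_swap_of_mem_not_mem x hqe' hpe
      rw [Equiv.swap_comm] at this
      rw [this, ha']; ring
    · right
      have hψ'T : ψ' T = ψ T := by rw [hψ' T hT, if_neg hP]
      refine ⟨by rw [hψ'T], by rw [hψ'T], ?_⟩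
      by_cases hp : p ∈ ψ T
      · -- then q ∈ ψ T
        have hq : q ∈ ψ T := by by_contra hq; exact hP ⟨hp, hq⟩
        left
        exact sum_swap_of_map x fun e he => by
          rcases eq_or_ne e p with rfl | hep
          · rwa [Equiv.swap_apply_left]
          rcases eq_or_ne e q with rfl | heq
          · rwa [Equiv.swap_apply_right]
          rwa [Equiv.swap_apply_of_ne_of_ne hep heq]
      · by_cases hq : q ∈ ψ T
        · right
          have : ∑ e ∈ ψ T, x (Equiv.swap q p e)
              = ∑ e ∈ ψ T, x e - x q + x p := sum_swap_of_mem_not_mem x hq hp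
          rw [Equiv.swap_comm] at this
          rw [this]; ring
        · left
          refine sum_swap_of_map x fun e he => ?_
          rw [Equiv.swap_apply_of_ne_of_ne (fun h => hp (by rw [← h]; exact he))
            (fun h => hq (by rw [← h]; exact he))]
          exact he
  rcases hfacts S hS with ⟨h1, h2, h3⟩ | ⟨h1, h2, h3 | h3⟩ <;>
    rcases hfacts S' hS' with ⟨g1, g2, g3⟩ | ⟨g1, g2, g3 | g3⟩ <;>
      (have ha1 := hsupa S hS; have hb1 := hsupb S hS;
       have ha2 := hsupa S' hS'; have hb2 := hsupb S' hS';
       rcases le_or_gt 0 (x q - x p) with hd | hd <;> linarith)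

end comb
section step
variable {D : Measure ℝ} [IsProbabilityMeasure D]
variable {ι : Type*} [Fintype ι] [DecidableEq ι]

lemma integrable_G {α : Type*} {F : Finset α} (hF : F.Nonempty)
    (χ : α → Finset ι) (hD : Integrable id D) (τ : ι → ι) :
    Integrable (fun x : ι → ℝ => F.sup' hF fun S => ∑ e ∈ χ S, x (τ e))
      (Measure.pi fun _ : ι => D) := by
  refine integrable_sup' hF _ fun S _ => ?_
  exact integrable_finset_sum _ fun e _ => integrable_eval_pi hD (τ e)

lemma measurable_G' {α : Type*} {F : Finset α} (hF : F.Nonempty)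
    (χ : α → Finset ι) (τ : ι → ι) :
    Measurable (fun x : ι → ℝ => F.sup' hF fun S => ∑ e ∈ χ S, x (τ e)) := by
  have h : (fun x : ι → ℝ => F.sup' hF fun S => ∑ e ∈ χ S, x (τ e))
      = F.sup' hF (fun S => fun x : ι → ℝ => ∑ e ∈ χ S, x (τ e)) := by
    funext x; rw [Finset.sup'_apply]
  rw [h]
  exact Finset.measurable_sup' hF fun S _ =>
    Finset.measurable_sum _ fun e _ => measurable_pi_apply _

/-- One symmetrization step: replacing `ψ` by `ψ'` can only decrease the expected sup. -/
lemma step_le {α : Type*} {F : Finset α} (hF : F.Nonempty) (hD : Integrable id D)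
    (ψ ψ' : α → Finset ι) (p q : ι) (hpq : p ≠ q)
    (hψ' : ∀ S ∈ F, ψ' S
      = if p ∈ ψ S ∧ q ∉ ψ S then insert q ((ψ S).erase p) else ψ S) :
    ∫ x, (F.sup' hF fun S => ∑ e ∈ ψ' S, x e) ∂(Measure.pi fun _ : ι => D)
      ≤ ∫ x, (F.sup' hF fun S => ∑ e ∈ ψ S, x e) ∂(Measure.pi fun _ : ι => D) := by
  classical
  set π := (Measure.pi fun _ : ι => D)
  set τ : ι ≃ ι := Equiv.swap p q
  have hg : Measurable (fun x : ι → ℝ => fun e => x (τ e)) :=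
    measurable_pi_lambda _ fun e => measurable_pi_apply _
  have hmap : Measure.map (fun x : ι → ℝ => fun e => x (τ e)) π = π :=
    map_comp_inj_pi τ τ.injective
  have hswap : ∀ (χ : α → Finset ι),
      ∫ x, (F.sup' hF fun S => ∑ e ∈ χ S, x (τ e)) ∂π
        = ∫ x, (F.sup' hF fun S => ∑ e ∈ χ S, x e) ∂π := by
    intro χ
    have := integral_map (μ := π) (f := fun x : ι → ℝ =>
        F.sup' hF fun S => ∑ e ∈ χ S, x e) hg.aemeasurable
      ((measurable_G' hF χ id).aestronglyMeasurable)
    rw [hmap] at this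
    rw [← this]
  have i1 : Integrable (fun x : ι → ℝ => F.sup' hF fun S => ∑ e ∈ ψ' S, x e) π :=
    integrable_G hF ψ' hD id
  have i2 : Integrable (fun x : ι → ℝ => F.sup' hF fun S => ∑ e ∈ ψ' S, x (τ e)) π :=
    integrable_G hF ψ' hD τ
  have i3 : Integrable (fun x : ι → ℝ => F.sup' hF fun S => ∑ e ∈ ψ S, x e) π :=
    integrable_G hF ψ hD id
  have i4 : Integrable (fun x : ι → ℝ => F.sup' hF fun S => ∑ e ∈ ψ S, x (τ e)) π :=
    integrable_G hF ψ hD τ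
  have key : ∫ x, ((F.sup' hF fun S => ∑ e ∈ ψ' S, x e)
        + (F.sup' hF fun S => ∑ e ∈ ψ' S, x (τ e))) ∂π
      ≤ ∫ x, ((F.sup' hF fun S => ∑ e ∈ ψ S, x e)
        + (F.sup' hF fun S => ∑ e ∈ ψ S, x (τ e))) ∂π := by
    refine integral_mono (i1.add i2) (i3.add i4) fun x => ?_
    exact sup'_swap_ineq hF ψ ψ' p q hpq hψ' x
  rw [integral_add i1 i2, integral_add i3 i4, hswap ψ', hswap ψ] at key
  linarith

end step
section main
variable {n k ℓ : ℕ}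

lemma fst_mem_of_row {ℓ : ℕ} {S : Finset (Fin n)} {T : Finset (Fin n × Fin n)}
    (hcard : T.card = S.card * ℓ)
    (hrow : ∀ i ∈ S, (T.filter fun e => e.1 = i).card = ℓ) :
    ∀ e ∈ T, e.1 ∈ S := by
  classical
  have hU : S.biUnion (fun i => T.filter fun e => e.1 = i)
      = T.filter fun e => e.1 ∈ S := by
    ext e
    simp only [Finset.mem_biUnion, Finset.mem_filter]
    constructor
    · rintro ⟨i, hi, he, rfl⟩; exact ⟨he, hi⟩
    · rintro ⟨he, h1⟩; exact ⟨e.1, h1, he, rfl⟩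
  have hdisj : ∀ a ∈ S, ∀ b ∈ S, a ≠ b →
      Disjoint (T.filter fun e => e.1 = a) (T.filter fun e => e.1 = b) := by
    intro a _ b _ hab
    refine Finset.disjoint_left.mpr fun e hea heb => ?_
    rw [Finset.mem_filter] at hea heb
    exact hab (hea.2 ▸ heb.2 ▸ rfl)
  have hc : (T.filter fun e => e.1 ∈ S).card = S.card * ℓ := by
    rw [← hU, Finset.card_biUnion hdisj, Finset.sum_congr rfl hrow,
      Finset.sum_const, smul_eq_mul]
  have hTeq : (T.filter fun e => e.1 ∈ S) = T :=
    Finset.eq_of_subset_of_card_le (Finset.filter_subset _ _) (by omega)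
  intro e he
  have he2 : e ∈ T.filter fun e => e.1 ∈ S := by rw [hTeq]; exact he
  exact (Finset.mem_filter.mp he2).2

lemma main_ind (hℓ : 1 ≤ ℓ) (hℓn : ℓ ≤ n) {D : Measure ℝ} [IsProbabilityMeasure D]
    (hD : Integrable id D)
    (F : Finset (Finset (Fin n))) (hF : F.Nonempty) (hk : ∀ S ∈ F, S.card = k) :
    ∀ (N : ℕ) (ψ : Finset (Fin n) → Finset (Fin n × Fin n)),
    (∀ S ∈ F, (ψ S).card = k * ℓ) →
    (∀ S ∈ F, ∀ i ∈ S, ((ψ S).filter fun e => e.1 = i).card = ℓ) →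
    ((∑ S ∈ F, ((ψ S).filter fun e => ℓ ≤ (e.2 : ℕ)).card) ≤ N) →
    ∫ x, (F.sup' hF fun S =>
        ∑ e ∈ S ×ˢ (Finset.univ.filter fun j : Fin n => (j : ℕ) < ℓ), x e)
        ∂(Measure.pi fun _ : Fin n × Fin n => D)
      ≤ ∫ x, (F.sup' hF fun S => ∑ e ∈ ψ S, x e)
        ∂(Measure.pi fun _ : Fin n × Fin n => D) := by
  classical
  have hC : (Finset.univ.filter fun j : Fin n => (j : ℕ) < ℓ).card = ℓ := by
    have himg : (Finset.univ.filter fun j : Fin n => (j : ℕ) < ℓ)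
        = Finset.image (fun m : Fin ℓ => Fin.castLE hℓn m) Finset.univ := by
      ext j
      simp only [Finset.mem_filter, Finset.mem_univ, true_and, Finset.mem_image]
      constructor
      · intro hj; exact ⟨⟨(j : ℕ), hj⟩, Fin.ext rfl⟩
      · rintro ⟨m, rfl⟩; exact m.2
    rw [himg, Finset.card_image_of_injective _ (Fin.castLE_injective hℓn)]
    simp
  intro N
  induction N with
  | zero =>
    intro ψ hcard hrow hsum
    have heq : ∀ S ∈ F, ψ S
        = S ×ˢ (Finset.univ.filter fun j : Fin n => (j : ℕ) < ℓ) := by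
      intro S hS
      have hcols : ∀ e ∈ ψ S, (e.2 : ℕ) < ℓ := by
        intro e he
        have h0 : ((ψ S).filter fun e => ℓ ≤ (e.2 : ℕ)).card = 0 := by
          have h1 : ((ψ S).filter fun e => ℓ ≤ (e.2 : ℕ)).card
              ≤ ∑ S ∈ F, ((ψ S).filter fun e => ℓ ≤ (e.2 : ℕ)).card :=
            Finset.single_le_sum (f := fun S => ((ψ S).filter fun e => ℓ ≤ (e.2 : ℕ)).card) (fun _ _ => Nat.zero_le _) hS
          omega
        by_contra hcon
        have : e ∈ (ψ S).filter fun e => ℓ ≤ (e.2 : ℕ) :=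
          Finset.mem_filter.mpr ⟨he, by omega⟩
        rw [Finset.card_eq_zero] at h0
        simp [h0] at this
      have hfst : ∀ e ∈ ψ S, e.1 ∈ S :=
        fst_mem_of_row (by rw [hcard S hS, hk S hS]) (hrow S hS)
      have hsub : ψ S ⊆ S ×ˢ (Finset.univ.filter fun j : Fin n => (j : ℕ) < ℓ) := by
        intro e he
        rw [Finset.mem_product]
        exact ⟨hfst e he, Finset.mem_filter.mpr ⟨Finset.mem_univ _, hcols e he⟩⟩
      refine Finset.eq_of_subset_of_card_le hsub ?_
      rw [Finset.card_product, hC, hcard S hS, hk S hS]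
    refine le_of_eq ?_
    congr 1
    funext x
    exact Finset.sup'_congr hF rfl (fun S hS => by rw [heq S hS])
  | succ N IH =>
    intro ψ hcard hrow hsum
    by_cases hle : (∑ S ∈ F, ((ψ S).filter fun e => ℓ ≤ (e.2 : ℕ)).card) ≤ N
    · exact IH ψ hcard hrow hle
    have hex : ∃ S₀ ∈ F, 0 < ((ψ S₀).filter fun e => ℓ ≤ (e.2 : ℕ)).card := by
      by_contra h
      push_neg at h
      have : (∑ S ∈ F, ((ψ S).filter fun e => ℓ ≤ (e.2 : ℕ)).card) = 0 :=
        Finset.sum_eq_zero fun S hS => Nat.le_zero.mp (h S hS)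
      omega
    obtain ⟨S₀, hS₀, hpos0⟩ := hex
    obtain ⟨⟨i, j⟩, hmemf⟩ := Finset.card_pos.mp hpos0
    rw [Finset.mem_filter] at hmemf
    obtain ⟨hpj, hj⟩ := hmemf
    have hj' : ℓ ≤ (j : ℕ) := hj
    have hiS₀ : i ∈ S₀ :=
      fst_mem_of_row (by rw [hcard S₀ hS₀, hk S₀ hS₀]) (hrow S₀ hS₀) _ hpj
    have hex_t : ∃ t : Fin n, (t : ℕ) < ℓ ∧ (i, t) ∉ ψ S₀ := by
      by_contra h
      push_neg at h
      set C := Finset.univ.filter fun t : Fin n => (t : ℕ) < ℓ with hCdef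
      have hsub : insert (i, j) (C.image fun t => (i, t))
          ⊆ (ψ S₀).filter fun e => e.1 = i := by
        intro e he
        rw [Finset.mem_insert] at he
        rcases he with rfl | he
        · exact Finset.mem_filter.mpr ⟨hpj, rfl⟩
        · obtain ⟨t, htC, rfl⟩ := Finset.mem_image.mp he
          have htℓ : (t : ℕ) < ℓ := (Finset.mem_filter.mp htC).2
          exact Finset.mem_filter.mpr ⟨h t htℓ, rfl⟩
      have hinj : Function.Injective (fun t : Fin n => ((i, t) : Fin n × Fin n)) :=
        fun a b hab => congrArg Prod.snd hab
      have hni : ((i, j) : Fin n × Fin n) ∉ C.image fun t => (i, t) := by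
        intro hmem
        obtain ⟨t, htC, hte⟩ := Finset.mem_image.mp hmem
        have ht2 : (t : ℕ) = (j : ℕ) := congrArg (fun u : Fin n => (u : ℕ)) (congrArg Prod.snd hte)
        have ht3 : (t : ℕ) < ℓ := (Finset.mem_filter.mp htC).2
        omega
      have hcardins : (insert ((i, j) : Fin n × Fin n)
          (C.image fun t => (i, t))).card = ℓ + 1 := by
        rw [Finset.card_insert_of_notMem hni, Finset.card_image_of_injective _ hinj, hC]
      have hle2 := Finset.card_le_card hsub
      rw [hcardins, hrow S₀ hS₀ i hiS₀] at hle2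
      omega
    obtain ⟨t, htℓ, htn⟩ := hex_t
    have hpq : ((i, j) : Fin n × Fin n) ≠ (i, t) := by
      intro h
      have : (j : ℕ) = (t : ℕ) := congrArg (fun u : Fin n => (u : ℕ)) (congrArg Prod.snd h)
      omega
    set ψ' := fun S => if (i, j) ∈ ψ S ∧ (i, t) ∉ ψ S
        then insert (i, t) ((ψ S).erase (i, j)) else ψ S with hψ'def
    have hcard' : ∀ S ∈ F, (ψ' S).card = k * ℓ := by
      intro S hS
      by_cases hP : (i, j) ∈ ψ S ∧ (i, t) ∉ ψ S
      · have h1 : (i, t) ∉ (ψ S).erase (i, j) :=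
          fun h => hP.2 (Finset.mem_of_mem_erase h)
        have h2 := Finset.card_pos.mpr ⟨(i, j), hP.1⟩
        simp only [ψ', if_pos hP]
        rw [Finset.card_insert_of_notMem h1, Finset.card_erase_of_mem hP.1,
          hcard S hS]
        have := hcard S hS
        omega
      · simp only [ψ', if_neg hP]; exact hcard S hS
    have hrow' : ∀ S ∈ F, ∀ i' ∈ S, ((ψ' S).filter fun e => e.1 = i').card = ℓ := by
      intro S hS i' hi'
      by_cases hP : (i, j) ∈ ψ S ∧ (i, t) ∉ ψ S
      · simp only [ψ', if_pos hP]
        rw [Finset.filter_insert]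
        by_cases hii : i = i'
        · subst hii
          rw [if_pos rfl, Finset.filter_erase]
        
          have hpf : ((i, j) : Fin n × Fin n) ∈ (ψ S).filter fun e => e.1 = i :=
            Finset.mem_filter.mpr ⟨hP.1, rfl⟩
          have hqf : ((i, t) : Fin n × Fin n)
              ∉ ((ψ S).filter fun e => e.1 = i).erase (i, j) :=
            fun h => hP.2 (Finset.mem_filter.mp (Finset.mem_of_mem_erase h)).1
          rw [Finset.card_insert_of_notMem hqf, Finset.card_erase_of_mem hpf,
            hrow S hS i hi']
          omega
        · have hne : ¬(((i, t) : Fin n × Fin n).1 = i') := hii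
          have hpn : ((i, j) : Fin n × Fin n) ∉ (ψ S).filter fun e => e.1 = i' := by
            intro h
            exact hii ((Finset.mem_filter.mp h).2)
          rw [if_neg hne, Finset.filter_erase, Finset.erase_eq_of_notMem hpn]
          exact hrow S hS i' hi'
      · simp only [ψ', if_neg hP]; exact hrow S hS i' hi'
    have hsum' : (∑ S ∈ F, ((ψ' S).filter fun e => ℓ ≤ (e.2 : ℕ)).card) ≤ N := by
      have hle1 : ∀ S ∈ F, ((ψ' S).filter fun e => ℓ ≤ (e.2 : ℕ)).card
          ≤ ((ψ S).filter fun e => ℓ ≤ (e.2 : ℕ)).card := by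
        intro S hS
        by_cases hP : (i, j) ∈ ψ S ∧ (i, t) ∉ ψ S
        · simp only [ψ', if_pos hP]
          have hne2 : ¬(ℓ ≤ (((i, t) : Fin n × Fin n).2 : ℕ)) := by
            have hs : (((i, t) : Fin n × Fin n).2 : ℕ) = (t : ℕ) := rfl
            omega
          rw [Finset.filter_insert, if_neg hne2, Finset.filter_erase]
          exact Finset.card_erase_le
        · simp only [ψ', if_neg hP]; exact le_refl _
      have hstrict : ((ψ' S₀).filter fun e => ℓ ≤ (e.2 : ℕ)).card
          < ((ψ S₀).filter fun e => ℓ ≤ (e.2 : ℕ)).card := by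
        have hP : (i, j) ∈ ψ S₀ ∧ (i, t) ∉ ψ S₀ := ⟨hpj, htn⟩
        simp only [ψ', if_pos hP]
        have hne2 : ¬(ℓ ≤ (((i, t) : Fin n × Fin n).2 : ℕ)) := by
          have hs : (((i, t) : Fin n × Fin n).2 : ℕ) = (t : ℕ) := rfl
          omega
        rw [Finset.filter_insert, if_neg hne2, Finset.filter_erase]
        have hpf : ((i, j) : Fin n × Fin n)
            ∈ (ψ S₀).filter fun e => ℓ ≤ (e.2 : ℕ) :=
          Finset.mem_filter.mpr ⟨hpj, hj⟩
        rw [Finset.card_erase_of_mem hpf]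
        have := Finset.card_pos.mpr ⟨_, hpf⟩
        omega
      have hlt := Finset.sum_lt_sum hle1 ⟨S₀, hS₀, hstrict⟩
      omega
    calc ∫ x, (F.sup' hF fun S =>
          ∑ e ∈ S ×ˢ (Finset.univ.filter fun j : Fin n => (j : ℕ) < ℓ), x e)
          ∂(Measure.pi fun _ : Fin n × Fin n => D)
        ≤ ∫ x, (F.sup' hF fun S => ∑ e ∈ ψ' S, x e)
          ∂(Measure.pi fun _ : Fin n × Fin n => D) := IH ψ' hcard' hrow' hsum'
      _ ≤ _ := step_le hF hD ψ ψ' (i, j) (i, t) hpq (fun S _ => rfl)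

end main

/-- Comparison lemma for proper liftings: if `F` is a `k`-uniform family over `[n]`,
`φ` is a proper lifting (each `S ∈ F` is sent to a `kℓ`-element subset of `[n]×[n]` with
exactly `ℓ` elements in each row `{i}×[n]`, `i ∈ S`), and `{A_{i,j}}`, `{Ã_{i,j}}` are
i.i.d. with common distribution `D`, then
`E[sup_{S∈F} Σ_{(i,j)∈S×[ℓ]} A_{i,j}] ≤ E[sup_{S∈F} Σ_{(i,j)∈φ(S)} Ã_{i,j}]`. -/

theorem stmt8 {Ω : Type*} [MeasurableSpace Ω] (μ : Measure Ω) [IsProbabilityMeasure μ]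
    (n k ℓ : ℕ) (hℓ : 1 ≤ ℓ)
    (F : Finset (Finset (Fin n))) (hF : F.Nonempty) (hk : ∀ S ∈ F, S.card = k)
    (φ : Finset (Fin n) → Finset (Fin n × Fin n))
    (hφcard : ∀ S ∈ F, (φ S).card = k * ℓ)
    (hφrow : ∀ S ∈ F, ∀ i ∈ S, ((φ S).filter fun e => e.1 = i).card = ℓ)
    (D : Measure ℝ) [IsProbabilityMeasure D]
    (A : Fin n × Fin ℓ → Ω → ℝ) (B : Fin n × Fin n → Ω → ℝ)
    (hAmeas : ∀ e, Measurable (A e)) (hBmeas : ∀ e, Measurable (B e))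
    (hAindep : iIndepFun A μ)
    (hBindep : iIndepFun B μ)
    (hAdist : ∀ e, μ.map (A e) = D) (hBdist : ∀ e, μ.map (B e) = D)
    (hAint : ∀ e, Integrable (A e) μ) (hBint : ∀ e, Integrable (B e) μ) :
    ∫ ω, F.sup' hF (fun S => ∑ i ∈ S, ∑ j : Fin ℓ, A (i, j) ω) ∂μ
      ≤ ∫ ω, F.sup' hF (fun S => ∑ e ∈ φ S, B e ω) ∂μ := by
  classical
  by_cases hk0 : k = 0
  · subst hk0
    have h1 : (fun ω => F.sup' hF (fun S => ∑ i ∈ S, ∑ j : Fin ℓ, A (i, j) ω))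
        = fun _ => (0 : ℝ) := by
      funext ω
      have : F.sup' hF (fun S => ∑ i ∈ S, ∑ j : Fin ℓ, A (i, j) ω)
          = F.sup' hF (fun _ => (0 : ℝ)) :=
        Finset.sup'_congr hF rfl (fun S hS => by
          rw [Finset.card_eq_zero.mp (hk S hS)]; simp)
      rw [this, Finset.sup'_const]
    have h2 : (fun ω => F.sup' hF (fun S => ∑ e ∈ φ S, B e ω))
        = fun _ => (0 : ℝ) := by
      funext ω
      have : F.sup' hF (fun S => ∑ e ∈ φ S, B e ω)
          = F.sup' hF (fun _ => (0 : ℝ)) :=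
        Finset.sup'_congr hF rfl (fun S hS => by
          have hφe : φ S = ∅ := Finset.card_eq_zero.mp (by rw [hφcard S hS]; ring)
          rw [hφe]; simp)
      rw [this, Finset.sup'_const]
    rw [h1, h2]
  · -- k ≥ 1, hence some i exists and ℓ ≤ n
    obtain ⟨S₁, hS₁⟩ := id hF
    have hS₁card : S₁.card = k := hk S₁ hS₁
    obtain ⟨i₁, hi₁⟩ := Finset.card_pos.mp (by omega : 0 < S₁.card)
    have hℓn : ℓ ≤ n := by
      have h1 := hφrow S₁ hS₁ i₁ hi₁
      have h2 : ((φ S₁).filter fun e => e.1 = i₁).card ≤ (Finset.univ : Finset (Fin n)).card := by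
        refine Finset.card_le_card_of_injOn (fun e => e.2) (fun _ _ => Finset.mem_univ _) ?_
        intro e he e' he' hee
        have h3 : e.1 = i₁ := (Finset.mem_filter.mp he).2
        have h4 : e'.1 = i₁ := (Finset.mem_filter.mp he').2
        exact Prod.ext (h3.trans h4.symm) hee
      rw [h1, Finset.card_univ, Fintype.card_fin] at h2
      exact h2
    set π₂ := (Measure.pi fun _ : Fin n × Fin n => D) with hπ₂
    set π₁ := (Measure.pi fun _ : Fin n × Fin ℓ => D) with hπ₁
    have hD : Integrable id D := by
      rw [← hAdist (i₁, ⟨0, hℓ⟩)]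
      exact (integrable_map_measure aestronglyMeasurable_id
        (hAmeas _).aemeasurable).mpr (hAint _)
    set C := (Finset.univ.filter fun j : Fin n => (j : ℕ) < ℓ) with hCdef
    -- RHS as an integral over π₂
    have hmapB : μ.map (fun ω e => B e ω) = π₂ :=
      lift_map_eq_pi μ B hBmeas hBindep hBdist
    have hRHS : ∫ ω, F.sup' hF (fun S => ∑ e ∈ φ S, B e ω) ∂μ
        = ∫ x, (F.sup' hF fun S => ∑ e ∈ φ S, x e) ∂π₂ := by
      have h1 := integral_map (μ := μ)
        (f := fun x : Fin n × Fin n → ℝ => F.sup' hF fun S => ∑ e ∈ φ S, x e)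
        (measurable_pi_lambda _ (fun e => hBmeas e)).aemeasurable
        ((measurable_G' hF φ id).aestronglyMeasurable)
      rw [hmapB] at h1
      rw [h1]
    -- LHS as an integral over π₁
    have hmapA : μ.map (fun ω e => A e ω) = π₁ :=
      lift_map_eq_pi μ A hAmeas hAindep hAdist
    have hLHS : ∫ ω, F.sup' hF (fun S => ∑ i ∈ S, ∑ j : Fin ℓ, A (i, j) ω) ∂μ
        = ∫ x, (F.sup' hF fun S =>
            ∑ e ∈ S ×ˢ (Finset.univ : Finset (Fin ℓ)), x e) ∂π₁ := by
      have h1 := integral_map (μ := μ)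
        (f := fun x : Fin n × Fin ℓ → ℝ => F.sup' hF fun S =>
          ∑ e ∈ S ×ˢ (Finset.univ : Finset (Fin ℓ)), x e)
        (measurable_pi_lambda _ (fun e => hAmeas e)).aemeasurable
        ((measurable_G' hF (fun S => S ×ˢ (Finset.univ : Finset (Fin ℓ)))
          id).aestronglyMeasurable)
      rw [hmapA] at h1
      rw [h1]
      congr 1
      funext ω
      refine Finset.sup'_congr hF rfl (fun S hS => ?_)
      rw [Finset.sum_product]
    -- transfer LHS from π₁ to π₂
    set emb : Fin n × Fin ℓ → Fin n × Fin n :=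
      fun e => (e.1, Fin.castLE hℓn e.2) with hembdef
    have hembinj : Function.Injective emb := by
      intro a b hab
      simp only [hembdef, Prod.mk.injEq] at hab
      exact Prod.ext hab.1 (Fin.castLE_injective hℓn hab.2)
    have hmapΦ : Measure.map (fun y : Fin n × Fin n → ℝ => fun e => y (emb e)) π₂ = π₁ :=
      map_comp_inj_pi emb hembinj
    have himg : ∀ S : Finset (Fin n),
        (S ×ˢ (Finset.univ : Finset (Fin ℓ))).image emb = S ×ˢ C := by
      intro S
      ext pr
      constructor
      · intro hmem
        obtain ⟨q, hq, rfl⟩ := Finset.mem_image.mp hmem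
        rw [Finset.mem_product] at hq
        rw [Finset.mem_product]
        refine ⟨hq.1, Finset.mem_filter.mpr ⟨Finset.mem_univ _, ?_⟩⟩
        exact q.2.2
      · intro hmem
        rw [Finset.mem_product] at hmem
        obtain ⟨ha, hb⟩ := hmem
        have hbℓ : (pr.2 : ℕ) < ℓ := (Finset.mem_filter.mp hb).2
        refine Finset.mem_image.mpr ⟨(pr.1, ⟨(pr.2 : ℕ), hbℓ⟩), ?_, ?_⟩
        · exact Finset.mem_product.mpr ⟨ha, Finset.mem_univ _⟩
        · exact Prod.ext rfl (Fin.ext rfl)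
    have htrans : ∫ x, (F.sup' hF fun S =>
          ∑ e ∈ S ×ˢ (Finset.univ : Finset (Fin ℓ)), x e) ∂π₁
        = ∫ y, (F.sup' hF fun S => ∑ e ∈ S ×ˢ C, y e) ∂π₂ := by
      have h2 := integral_map (μ := π₂)
        (φ := fun y : Fin n × Fin n → ℝ => fun e => y (emb e))
        (f := fun x : Fin n × Fin ℓ → ℝ => F.sup' hF fun S =>
          ∑ e ∈ S ×ˢ (Finset.univ : Finset (Fin ℓ)), x e)
        (measurable_pi_lambda _ (fun e => measurable_pi_apply _)).aemeasurable
        ((measurable_G' hF (fun S => S ×ˢ (Finset.univ : Finset (Fin ℓ)))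
          id).aestronglyMeasurable)
      rw [hmapΦ] at h2
      rw [h2]
      congr 1
      funext y
      refine Finset.sup'_congr hF rfl (fun S hS => ?_)
      rw [← himg S, Finset.sum_image (fun a _ b _ h => hembinj h)]
    rw [hLHS, hRHS, htrans]
    exact main_ind hℓ hℓn hD F hF hk
      (∑ S ∈ F, ((φ S).filter fun e => ℓ ≤ (e.2 : ℕ)).card) φ hφcard hφrow le_rfl
end

section
/- If an ℓ-uniform family 𝒮 ⊆ 2^{[n]} is a (p^ℓ, ε/ℓ²)-robust sunflower, then it is also a (p, ε)-robust clique sunflower. -/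
open MeasureTheory ENNReal

/-- The random-subset measure on `U → Bool` in which each coordinate is `true`
independently with probability `p`. -/
noncomputable def randFun (U : Type*) [Fintype U] [DecidableEq U] (p : ℝ) :
    Measure (U → Bool) :=
  ∑ f : U → Bool,
    (∏ u : U, if f u then ENNReal.ofReal p else ENNReal.ofReal (1 - p)) • Measure.dirac f

/-- The core (common intersection) of a family of sets. -/
def core {U : Type*} [Fintype U] [DecidableEq U] (𝒮 : Finset (Finset U)) : Finset U := 𝒮.inf id

/-- `𝒮` is a `(q, ε)`-robust sunflower: sampling each element of `U` independently with
probability `q`, with probability at least `1 - ε` some `S ∈ 𝒮` satisfies `S ⊆ W ∪ C`,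
where `C` is the core of `𝒮`. -/
def IsRobustSunflower {U : Type*} [Fintype U] [DecidableEq U]
    (𝒮 : Finset (Finset U)) (q ε : ℝ) : Prop :=
  ENNReal.ofReal (1 - ε) ≤
    randFun U q {W | ∃ S ∈ 𝒮, ∀ x ∈ S, x ∈ core 𝒮 ∨ W x = true}

/-- The edge set `K_S` of the complete graph on the vertex set `S`. -/
def cliqueEdges {n : ℕ} (S : Finset (Fin n)) : Finset (Sym2 (Fin n)) :=
  ((S ×ˢ S).filter fun q => q.1 ≠ q.2).image fun q => s(q.1, q.2)

/-- `𝒮` is a `(p, ε)`-robust clique sunflower: for `G ~ G(n,p)`, with probability at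
least `1 - ε` some `S ∈ 𝒮` satisfies `K_S ⊆ G ∪ K_C`, where `C` is the core of `𝒮`. -/
def IsRobustCliqueSunflower {n : ℕ} (𝒮 : Finset (Finset (Fin n))) (p ε : ℝ) : Prop :=
  ENNReal.ofReal (1 - ε) ≤
    randFun (Sym2 (Fin n)) p
      {G | ∃ S ∈ 𝒮, ∀ e ∈ cliqueEdges S, e ∈ cliqueEdges (core 𝒮) ∨ G e = true}

/-! ### Auxiliary machinery -/

section Tools
variable {X : Type*} [Fintype X] [DecidableEq X]

open Classical in
noncomputable def ind (P : Prop) : ℝ≥0∞ := if P then 1 else 0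

lemma ind_of {P : Prop} (h : P) : ind P = 1 := by simp [ind, h]
lemma ind_of_not {P : Prop} (h : ¬ P) : ind P = 0 := by simp [ind, h]
lemma ind_le_one (P : Prop) : ind P ≤ 1 := by
  by_cases h : P <;> simp [ind, h]
lemma ind_mono {P Q : Prop} (h : P → Q) : ind P ≤ ind Q := by
  by_cases hP : P
  · rw [ind_of hP, ind_of (h hP)]
  · rw [ind_of_not hP]; exact zero_le
lemma ind_and (P Q : Prop) : ind (P ∧ Q) = ind P * ind Q := by
  by_cases hP : P <;> by_cases hQ : Q <;>
    simp [ind_of, ind_of_not, hP, hQ, ind_of (And.intro hP hQ)]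
lemma ind_iff {P Q : Prop} (h : P ↔ Q) : ind P = ind Q := by
  by_cases hP : P
  · rw [ind_of hP, ind_of (h.mp hP)]
  · rw [ind_of_not hP, ind_of_not (fun hq => hP (h.mpr hq))]
lemma ind_add_ind_not (P : Prop) : ind P + ind (¬ P) = 1 := by
  by_cases h : P <;> simp [ind_of, ind_of_not, h]

noncomputable def wt (r : ℝ) (f : X → Bool) : ℝ≥0∞ :=
  ∏ x : X, if f x then ENNReal.ofReal r else ENNReal.ofReal (1 - r)

lemma sum_pi_bool (ψ : X → Bool → ℝ≥0∞) :
    ∑ f : X → Bool, ∏ x : X, ψ x (f x) = ∏ x : X, (ψ x true + ψ x false) := by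
  rw [← Fintype.prod_sum (f := ψ)]
  congr 1; ext x; simp [Fintype.sum_bool]

variable {r : ℝ}

lemma ofReal_add_ofReal_one (hr0 : 0 ≤ r) (hr1 : r ≤ 1) :
    ENNReal.ofReal r + ENNReal.ofReal (1 - r) = 1 := by
  rw [← ENNReal.ofReal_add hr0 (by linarith)]
  norm_num

lemma sum_wt (hr0 : 0 ≤ r) (hr1 : r ≤ 1) : ∑ f : X → Bool, wt r f = 1 := by
  unfold wt
  rw [sum_pi_bool (fun x b => if b then ENNReal.ofReal r else ENNReal.ofReal (1 - r))]
  simp [ofReal_add_ofReal_one hr0 hr1]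

lemma sum_wt_cyl (hr0 : 0 ≤ r) (hr1 : r ≤ 1) (B : Finset X) :
    ∑ f : X → Bool, wt r f * ind (∀ b ∈ B, f b = true) = (ENNReal.ofReal r) ^ B.card := by
  classical
  have key : ∀ f : X → Bool, wt r f * ind (∀ b ∈ B, f b = true)
      = ∏ x : X, ((if f x then ENNReal.ofReal r else ENNReal.ofReal (1 - r)) *
          (if x ∈ B then (if f x then 1 else 0) else 1)) := by
    intro f
    rw [Finset.prod_mul_distrib]
    congr 1
    rw [Fintype.prod_ite_mem B (fun x => if f x then (1:ℝ≥0∞) else 0), Finset.prod_boole]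
    by_cases hB : ∀ b ∈ B, f b = true
    · rw [ind_of hB, if_pos hB]
    · rw [ind_of_not hB, if_neg hB]
  rw [Finset.sum_congr rfl (fun f _ => key f)]
  rw [sum_pi_bool (fun x b => (if b then ENNReal.ofReal r else ENNReal.ofReal (1 - r)) *
      (if x ∈ B then (if b then (1:ℝ≥0∞) else 0) else 1))]
  have hterm : ∀ x : X, ((if (true:Bool) then ENNReal.ofReal r else ENNReal.ofReal (1 - r)) *
          (if x ∈ B then (if (true:Bool) then (1:ℝ≥0∞) else 0) else 1)
        + (if (false:Bool) then ENNReal.ofReal r else ENNReal.ofReal (1 - r)) *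
          (if x ∈ B then (if (false:Bool) then (1:ℝ≥0∞) else 0) else 1))
      = if x ∈ B then ENNReal.ofReal r else 1 := by
    intro x
    by_cases hx : x ∈ B <;> simp [hx, ofReal_add_ofReal_one hr0 hr1]
  rw [Finset.prod_congr rfl (fun x _ => hterm x),
    Fintype.prod_ite_mem B (fun _ => ENNReal.ofReal r), Finset.prod_const]

lemma sum_wt_onebit (hr0 : 0 ≤ r) (hr1 : r ≤ 1) (z : X) (h : Bool → ℝ≥0∞) :
    ∑ f : X → Bool, wt r f * h (f z)
      = ENNReal.ofReal r * h true + ENNReal.ofReal (1 - r) * h false := by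
  classical
  have key : ∀ f : X → Bool, wt r f * h (f z)
      = ∏ x : X, ((if f x then ENNReal.ofReal r else ENNReal.ofReal (1 - r)) *
          (if x = z then h (f x) else 1)) := by
    intro f
    rw [Finset.prod_mul_distrib]
    congr 1
    rw [Fintype.prod_ite_eq' z (fun x => h (f x))]
  rw [Finset.sum_congr rfl (fun f _ => key f)]
  rw [sum_pi_bool (fun x b => (if b then ENNReal.ofReal r else ENNReal.ofReal (1 - r)) *
      (if x = z then h b else 1))]
  rw [Finset.prod_eq_single z ?h1 ?h2]
  · simp
  · intro x _ hx
    simp [hx, ofReal_add_ofReal_one hr0 hr1]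
  · intro hz; exact absurd (Finset.mem_univ z) hz

open Classical in
noncomputable def combine (D : X → Prop) (f g : X → Bool) : X → Bool :=
  fun x => if D x then f x else g x

omit [Fintype X] [DecidableEq X] in
lemma combine_combine (D : X → Prop) (f g : X → Bool) :
    combine D (combine D f g) (combine D g f) = f := by
  classical
  funext x
  by_cases hx : D x <;> simp [combine, hx]

omit [DecidableEq X] in
lemma wt_combine_mul (D : X → Prop) (f g : X → Bool) :
    wt r (combine D f g) * wt r (combine D g f) = wt r f * wt r g := by
  classical
  unfold wt
  rw [← Finset.prod_mul_distrib, ← Finset.prod_mul_distrib]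
  refine Finset.prod_congr rfl (fun x _ => ?_)
  by_cases hx : D x <;> simp [combine, hx, mul_comm]

set_option maxHeartbeats 2000000 in
lemma fubini_combine (hr0 : 0 ≤ r) (hr1 : r ≤ 1) (D : X → Prop) (Φ : (X → Bool) → ℝ≥0∞) :
    ∑ h : X → Bool, wt r h * Φ h
      = ∑ f : X → Bool, ∑ g : X → Bool, wt r f * wt r g * Φ (combine D f g) := by
  classical
  have hσ : Function.Bijective (fun p : (X → Bool) × (X → Bool) =>
      (combine D p.1 p.2, combine D p.2 p.1)) := by
    have : Function.Involutive (fun p : (X → Bool) × (X → Bool) =>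
        (combine D p.1 p.2, combine D p.2 p.1)) := by
      intro p
      simp only [combine_combine]
    exact this.bijective
  have key : ∑ p : (X → Bool) × (X → Bool), wt r p.1 * wt r p.2 * Φ (combine D p.1 p.2)
      = ∑ p : (X → Bool) × (X → Bool), wt r p.1 * wt r p.2 * Φ p.1 := by
    refine Fintype.sum_bijective _ hσ _ _ (fun p => ?_)
    show wt r p.1 * wt r p.2 * Φ (combine D p.1 p.2)
      = wt r (combine D p.1 p.2) * wt r (combine D p.2 p.1) * Φ (combine D p.1 p.2)
    rw [wt_combine_mul]
  have collapse : ∀ f : X → Bool, ∑ g : X → Bool, wt r f * wt r g * Φ f = wt r f * Φ f := by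
    intro f
    have hterm : ∀ g : X → Bool, wt r f * wt r g * Φ f = wt r g * (wt r f * Φ f) :=
      fun g => by ring
    rw [Finset.sum_congr rfl (fun g _ => hterm g), ← Finset.sum_mul, sum_wt hr0 hr1, one_mul]
  calc ∑ h : X → Bool, wt r h * Φ h
      = ∑ f : X → Bool, ∑ g : X → Bool, wt r f * wt r g * Φ f :=
        (Finset.sum_congr rfl (fun f _ => collapse f)).symm
    _ = ∑ p : (X → Bool) × (X → Bool), wt r p.1 * wt r p.2 * Φ p.1 :=
        (Fintype.sum_prod_type (f := fun p : (X → Bool) × (X → Bool) =>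
          wt r p.1 * wt r p.2 * Φ p.1)).symm
    _ = ∑ p : (X → Bool) × (X → Bool), wt r p.1 * wt r p.2 * Φ (combine D p.1 p.2) := key.symm
    _ = ∑ f : X → Bool, ∑ g : X → Bool, wt r f * wt r g * Φ (combine D f g) :=
        Fintype.sum_prod_type (f := fun p : (X → Bool) × (X → Bool) =>
          wt r p.1 * wt r p.2 * Φ (combine D p.1 p.2))

lemma randFun_apply {U : Type*} [Fintype U] [DecidableEq U] (r : ℝ) (A : Set (U → Bool)) :
    randFun U r A = ∑ f : U → Bool, wt r f * ind (f ∈ A) := by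
  rw [randFun, MeasureTheory.Measure.finset_sum_apply]
  refine Finset.sum_congr rfl (fun f _ => ?_)
  rw [MeasureTheory.Measure.smul_apply, MeasureTheory.Measure.dirac_apply, smul_eq_mul]
  unfold wt
  have h1 : A.indicator 1 f = ind (f ∈ A) := by
    by_cases hf : f ∈ A <;> simp [hf, ind_of, ind_of_not, Set.indicator_apply]
  rw [h1]
end Tools

/-! ### The clique-vs-subset comparison -/

section Main
variable {n : ℕ}

/-- All edges needed for `P ∪ C` to be a clique over the core `C` are present in `G`. -/
def Sat (C : Finset (Fin n)) (G : Sym2 (Fin n) → Bool) (P : Finset (Fin n)) : Prop :=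
  ∀ x ∈ P, ∀ y ∈ P ∪ C, x ≠ y → G s(x, y) = true

def Cov (W : Fin n → Bool) (P : Finset (Fin n)) : Prop := ∀ x ∈ P, W x = true

/-- `z`'s star towards `(P ∪ C).erase z` is present in `f`. -/
def StarP (C : Finset (Fin n)) (z : Fin n) (f : Sym2 (Fin n) → Bool)
    (P : Finset (Fin n)) : Prop :=
  ∀ y ∈ (P ∪ C).erase z, f s(z, y) = true

noncomputable def Afail (p : ℝ) (C : Finset (Fin n)) (F : Finset (Finset (Fin n))) : ℝ≥0∞ :=
  ∑ G : Sym2 (Fin n) → Bool, wt p G * ind (∀ P ∈ F, ¬ Sat C G P)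

noncomputable def Bfail (q : ℝ) (F : Finset (Finset (Fin n))) : ℝ≥0∞ :=
  ∑ W : Fin n → Bool, wt q W * ind (∀ P ∈ F, ¬ Cov W P)

lemma cov_combine_of_not_mem {z : Fin n} {f g : Fin n → Bool} {P : Finset (Fin n)}
    (hz : z ∉ P) : Cov (combine (· = z) f g) P ↔ Cov g P := by
  unfold Cov combine
  refine forall₂_congr (fun x hx => ?_)
  rw [if_neg (by rintro rfl; exact hz hx)]

lemma cov_combine_of_mem {z : Fin n} {f g : Fin n → Bool} {P : Finset (Fin n)}
    (hz : z ∈ P) :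
    Cov (combine (· = z) f g) P ↔ (f z = true ∧ Cov g (P.erase z)) := by
  constructor
  · intro h
    refine ⟨?_, ?_⟩
    · have := h z hz
      simpa [combine] using this
    · intro x hx
      have hxz : x ≠ z := Finset.ne_of_mem_erase hx
      have := h x (Finset.mem_of_mem_erase hx)
      simpa [combine, hxz] using this
  · rintro ⟨h1, h2⟩ x hx
    by_cases hxz : x = z
    · subst hxz
      simpa [combine] using h1
    · have := h2 x (Finset.mem_erase.mpr ⟨hxz, hx⟩)
      simpa [combine, hxz] using this

lemma sat_combine_of_not_mem {C : Finset (Fin n)} {z : Fin n}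
    {f g : Sym2 (Fin n) → Bool} {P : Finset (Fin n)} (hzP : z ∉ P) (hzC : z ∉ C) :
    Sat C (combine (z ∈ ·) f g) P ↔ Sat C g P := by
  unfold Sat
  refine forall₂_congr (fun x hx => forall₂_congr (fun y hy => imp_congr_right (fun hxy => ?_)))
  have hznot : ¬ z ∈ s(x, y) := by
    rw [Sym2.mem_iff]
    rintro (rfl | rfl)
    · exact hzP hx
    · rcases Finset.mem_union.mp hy with h' | h'
      · exact hzP h'
      · exact hzC h'
  unfold combine
  rw [if_neg hznot]

lemma sat_combine_of_mem {C : Finset (Fin n)} {z : Fin n}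
    {f g : Sym2 (Fin n) → Bool} {P : Finset (Fin n)} (hzP : z ∈ P) (hzC : z ∉ C) :
    Sat C (combine (z ∈ ·) f g) P ↔ (StarP C z f P ∧ Sat C g (P.erase z)) := by
  constructor
  · intro h
    constructor
    · intro y hy
      have hyz : y ≠ z := Finset.ne_of_mem_erase hy
      have hyPC : y ∈ P ∪ C := Finset.mem_of_mem_erase hy
      have := h z hzP y hyPC (Ne.symm hyz)
      have hmem : z ∈ s(z, y) := by rw [Sym2.mem_iff]; exact Or.inl rfl
      simpa [combine, hmem] using this
    · intro x hx y hy hxy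
      have hxz : x ≠ z := Finset.ne_of_mem_erase hx
      have hxP : x ∈ P := Finset.mem_of_mem_erase hx
      have hyz : y ≠ z := by
        rcases Finset.mem_union.mp hy with h' | h'
        · exact Finset.ne_of_mem_erase h'
        · rintro rfl; exact hzC h'
      have hyPC : y ∈ P ∪ C := by
        rcases Finset.mem_union.mp hy with h' | h'
        · exact Finset.mem_union.mpr (Or.inl (Finset.mem_of_mem_erase h'))
        · exact Finset.mem_union.mpr (Or.inr h')
      have := h x hxP y hyPC hxy
      have hznot : ¬ z ∈ s(x, y) := by
        rw [Sym2.mem_iff]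
        rintro (rfl | rfl)
        · exact hxz rfl
        · exact hyz rfl
      simpa [combine, hznot] using this
  · rintro ⟨hstar, hsat⟩ x hx y hy hxy
    by_cases hxz : x = z
    · subst hxz
      have hyY : y ∈ (P ∪ C).erase x := Finset.mem_erase.mpr ⟨Ne.symm hxy, hy⟩
      have := hstar y hyY
      have hmem : x ∈ s(x, y) := by rw [Sym2.mem_iff]; exact Or.inl rfl
      simpa [combine, hmem] using this
    · by_cases hyz : y = z
      · subst hyz
        have hxY : x ∈ (P ∪ C).erase y := Finset.mem_erase.mpr ⟨hxz, Finset.mem_union.mpr (Or.inl hx)⟩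
        have := hstar x hxY
        have hmem : y ∈ s(x, y) := by rw [Sym2.mem_iff]; exact Or.inr rfl
        have hswap : s(y, x) = s(x, y) := Sym2.eq_swap
        rw [hswap] at this
        simpa [combine, hmem] using this
      · have hxP' : x ∈ P.erase z := Finset.mem_erase.mpr ⟨hxz, hx⟩
        have hyPC' : y ∈ P.erase z ∪ C := by
          rcases Finset.mem_union.mp hy with h' | h'
          · exact Finset.mem_union.mpr (Or.inl (Finset.mem_erase.mpr ⟨hyz, h'⟩))
          · exact Finset.mem_union.mpr (Or.inr h')
        have := hsat x hxP' y hyPC' hxy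
        have hznot : ¬ z ∈ s(x, y) := by
          rw [Sym2.mem_iff]
          rintro (rfl | rfl)
          · exact hxz rfl
          · exact hyz rfl
        simpa [combine, hznot] using this

lemma Bfail_step {q : ℝ} (hq0 : 0 ≤ q) (hq1 : q ≤ 1) (z : Fin n)
    (F : Finset (Finset (Fin n))) :
    Bfail q F
      = ENNReal.ofReal q * Bfail q ((F.filter (fun P => z ∉ P)) ∪
          ((F.filter (fun P => z ∈ P)).image (fun P => P.erase z)))
        + ENNReal.ofReal (1 - q) * Bfail q (F.filter (fun P => z ∉ P)) := by
  classical
  set F0 := F.filter (fun P => z ∉ P) with hF0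
  set F1 := (F.filter (fun P => z ∈ P)).image (fun P => P.erase z) with hF1
  have point : ∀ f g : Fin n → Bool,
      ind (∀ P ∈ F, ¬ Cov (combine (· = z) f g) P)
        = ind (∀ P ∈ F0, ¬ Cov g P) *
          (if f z then ind (∀ Q ∈ F1, ¬ Cov g Q) else 1) := by
    intro f g
    by_cases hb : f z = true
    · rw [if_pos hb, ← ind_and]
      apply ind_iff
      constructor
      · intro hall
        constructor
        · intro P hP
          have hP' := Finset.mem_filter.mp hP
          exact fun hc => hall P hP'.1 ((cov_combine_of_not_mem hP'.2).mpr hc)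
        · intro Q hQ
          obtain ⟨P, hPf, rfl⟩ := Finset.mem_image.mp hQ
          have hP' := Finset.mem_filter.mp hPf
          intro hc
          exact hall P hP'.1 ((cov_combine_of_mem hP'.2).mpr ⟨hb, hc⟩)
      · rintro ⟨h0, h1⟩ P hP hc
        by_cases hzP : z ∈ P
        · exact h1 (P.erase z)
            (Finset.mem_image.mpr ⟨P, Finset.mem_filter.mpr ⟨hP, hzP⟩, rfl⟩)
            ((cov_combine_of_mem hzP).mp hc).2
        · exact h0 P (Finset.mem_filter.mpr ⟨hP, hzP⟩) ((cov_combine_of_not_mem hzP).mp hc)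
    · rw [if_neg hb, mul_one]
      apply ind_iff
      constructor
      · intro hall P hP
        have hP' := Finset.mem_filter.mp hP
        exact fun hc => hall P hP'.1 ((cov_combine_of_not_mem hP'.2).mpr hc)
      · intro h0 P hP hc
        by_cases hzP : z ∈ P
        · exact hb ((cov_combine_of_mem hzP).mp hc).1
        · exact h0 P (Finset.mem_filter.mpr ⟨hP, hzP⟩) ((cov_combine_of_not_mem hzP).mp hc)
  rw [Bfail, fubini_combine hq0 hq1 (· = z) (fun W => ind (∀ P ∈ F, ¬ Cov W P))]
  have step1 : ∀ f g : Fin n → Bool,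
      wt q f * wt q g * ind (∀ P ∈ F, ¬ Cov (combine (· = z) f g) P)
        = wt q f * ((wt q g * ind (∀ P ∈ F0, ¬ Cov g P)) *
            (if f z then ind (∀ Q ∈ F1, ¬ Cov g Q) else 1)) := by
    intro f g
    rw [point f g]
    ring
  rw [Finset.sum_congr rfl (fun f _ => Finset.sum_congr rfl (fun g _ => step1 f g))]
  rw [Finset.sum_comm]
  have inner : ∀ g : Fin n → Bool,
      ∑ f : Fin n → Bool, wt q f * ((wt q g * ind (∀ P ∈ F0, ¬ Cov g P)) *
          (if f z then ind (∀ Q ∈ F1, ¬ Cov g Q) else 1))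
        = ENNReal.ofReal q * (wt q g * (ind (∀ P ∈ F0, ¬ Cov g P) * ind (∀ Q ∈ F1, ¬ Cov g Q)))
          + ENNReal.ofReal (1 - q) * (wt q g * ind (∀ P ∈ F0, ¬ Cov g P)) := by
    intro g
    have := sum_wt_onebit (X := Fin n) hq0 hq1 z
      (fun b => (wt q g * ind (∀ P ∈ F0, ¬ Cov g P)) *
        (if b then ind (∀ Q ∈ F1, ¬ Cov g Q) else 1))
    simp only [if_pos, if_neg, Bool.ite_eq_true_distrib] at this
    rw [this]
    simp [mul_assoc]
  rw [Finset.sum_congr rfl (fun g _ => inner g)]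
  rw [Finset.sum_add_distrib, ← Finset.mul_sum, ← Finset.mul_sum]
  congr 1
  congr 1
  refine Finset.sum_congr rfl (fun g _ => ?_)
  congr 1
  rw [← ind_and]
  apply ind_iff
  rw [Finset.forall_mem_union]

lemma Afail_step {p q : ℝ} (hp0 : 0 ≤ p) (hp1 : p ≤ 1) (hq0 : 0 ≤ q) (hq1 : q ≤ 1)
    (C : Finset (Fin n)) (z : Fin n) (hzC : z ∉ C) (F : Finset (Finset (Fin n)))
    (hexp : ∀ P ∈ F, z ∈ P → q ≤ p ^ ((P ∪ C).erase z).card) :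
    Afail p C F
      ≤ ENNReal.ofReal q * Afail p C ((F.filter (fun P => z ∉ P)) ∪
          ((F.filter (fun P => z ∈ P)).image (fun P => P.erase z)))
        + ENNReal.ofReal (1 - q) * Afail p C (F.filter (fun P => z ∉ P)) := by
  classical
  set F0 := F.filter (fun P => z ∉ P) with hF0
  set F1 := (F.filter (fun P => z ∈ P)).image (fun P => P.erase z) with hF1
  have point : ∀ f g : Sym2 (Fin n) → Bool,
      ind (∀ P ∈ F, ¬ Sat C (combine (z ∈ ·) f g) P)
        = ind (∀ P ∈ F0, ¬ Sat C g P) *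
          ind (∀ P ∈ F.filter (fun P => z ∈ P), ¬ (StarP C z f P ∧ Sat C g (P.erase z))) := by
    intro f g
    rw [← ind_and]
    apply ind_iff
    constructor
    · intro hall
      constructor
      · intro P hP
        have hP' := Finset.mem_filter.mp hP
        exact fun hc => hall P hP'.1 ((sat_combine_of_not_mem hP'.2 hzC).mpr hc)
      · intro P hP
        have hP' := Finset.mem_filter.mp hP
        rintro ⟨hstar, hsat⟩
        exact hall P hP'.1 ((sat_combine_of_mem hP'.2 hzC).mpr ⟨hstar, hsat⟩)
    · rintro ⟨h0, h1⟩ P hP hc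
      by_cases hzP : z ∈ P
      · exact h1 P (Finset.mem_filter.mpr ⟨hP, hzP⟩) ((sat_combine_of_mem hzP hzC).mp hc)
      · exact h0 P (Finset.mem_filter.mpr ⟨hP, hzP⟩) ((sat_combine_of_not_mem hzP hzC).mp hc)
  rw [Afail, fubini_combine hp0 hp1 (z ∈ ·) (fun G => ind (∀ P ∈ F, ¬ Sat C G P))]
  have step1 : ∀ f g : Sym2 (Fin n) → Bool,
      wt p f * wt p g * ind (∀ P ∈ F, ¬ Sat C (combine (z ∈ ·) f g) P)
        = (wt p g * ind (∀ P ∈ F0, ¬ Sat C g P)) *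
            (wt p f * ind (∀ P ∈ F.filter (fun P => z ∈ P),
              ¬ (StarP C z f P ∧ Sat C g (P.erase z)))) := by
    intro f g
    rw [point f g]
    ring
  rw [Finset.sum_congr rfl (fun f _ => Finset.sum_congr rfl (fun g _ => step1 f g))]
  rw [Finset.sum_comm]
  have innerB : ∀ g : Sym2 (Fin n) → Bool,
      ∑ f : Sym2 (Fin n) → Bool, wt p f * ind (∀ P ∈ F.filter (fun P => z ∈ P),
          ¬ (StarP C z f P ∧ Sat C g (P.erase z)))
        ≤ ENNReal.ofReal q * ind (∀ P ∈ F.filter (fun P => z ∈ P), ¬ Sat C g (P.erase z))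
          + ENNReal.ofReal (1 - q) := by
    intro g
    by_cases hQ : ∀ P ∈ F.filter (fun P => z ∈ P), ¬ Sat C g (P.erase z)
    · rw [ind_of hQ, mul_one]
      rw [ofReal_add_ofReal_one hq0 hq1]
      calc ∑ f : Sym2 (Fin n) → Bool, wt p f * ind (∀ P ∈ F.filter (fun P => z ∈ P),
            ¬ (StarP C z f P ∧ Sat C g (P.erase z)))
          ≤ ∑ f : Sym2 (Fin n) → Bool, wt p f * 1 :=
            Finset.sum_le_sum (fun f _ => mul_le_mul_right (ind_le_one _) _)
        _ = 1 := by
            rw [Finset.sum_congr rfl (fun f _ => mul_one (wt p f)), sum_wt hp0 hp1]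
    · push_neg at hQ
      obtain ⟨P₀, hP₀mem, hsat₀⟩ := hQ
      have hzP₀ : z ∈ P₀ := (Finset.mem_filter.mp hP₀mem).2
      have hP₀F : P₀ ∈ F := (Finset.mem_filter.mp hP₀mem).1
      rw [ind_of_not (by push_neg; exact ⟨P₀, hP₀mem, hsat₀⟩), mul_zero, zero_add]
      have mono : ∀ f : Sym2 (Fin n) → Bool,
          ind (∀ P ∈ F.filter (fun P => z ∈ P), ¬ (StarP C z f P ∧ Sat C g (P.erase z)))
            ≤ ind (¬ StarP C z f P₀) :=
        fun f => ind_mono (fun hall hstar => hall P₀ hP₀mem ⟨hstar, hsat₀⟩)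
      have hcyl : ∑ f : Sym2 (Fin n) → Bool, wt p f * ind (StarP C z f P₀)
          = (ENNReal.ofReal p) ^ ((P₀ ∪ C).erase z).card := by
        have hinj : Set.InjOn (fun y => s(z, y)) ((P₀ ∪ C).erase z) := by
          intro y1 _ y2 _ hy
          exact (Sym2.congr_right (a := z)).mp hy
        have hcard : (((P₀ ∪ C).erase z).image (fun y => s(z, y))).card
            = ((P₀ ∪ C).erase z).card := Finset.card_image_of_injOn hinj
        rw [← hcard, ← sum_wt_cyl hp0 hp1 (((P₀ ∪ C).erase z).image (fun y => s(z, y)))]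
        refine Finset.sum_congr rfl (fun f _ => ?_)
        congr 1
        apply ind_iff
        constructor
        · intro hS b hb
          obtain ⟨y, hy, rfl⟩ := Finset.mem_image.mp hb
          exact hS y hy
        · intro hB y hy
          exact hB (s(z, y)) (Finset.mem_image.mpr ⟨y, hy, rfl⟩)
      have hsplit : (∑ f : Sym2 (Fin n) → Bool, wt p f * ind (StarP C z f P₀))
          + (∑ f : Sym2 (Fin n) → Bool, wt p f * ind (¬ StarP C z f P₀)) = 1 := by
        rw [← Finset.sum_add_distrib]
        rw [Finset.sum_congr rfl (fun f _ => by rw [← mul_add, ind_add_ind_not, mul_one])]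
        exact sum_wt hp0 hp1
      have hqle : ENNReal.ofReal q ≤ ∑ f : Sym2 (Fin n) → Bool, wt p f * ind (StarP C z f P₀) := by
        rw [hcyl, ← ENNReal.ofReal_pow hp0]
        exact ENNReal.ofReal_le_ofReal (hexp P₀ hP₀F hzP₀)
      have hstep : (∑ f : Sym2 (Fin n) → Bool, wt p f * ind (¬ StarP C z f P₀))
          + ENNReal.ofReal q ≤ ENNReal.ofReal (1 - q) + ENNReal.ofReal q := by
        calc (∑ f : Sym2 (Fin n) → Bool, wt p f * ind (¬ StarP C z f P₀)) + ENNReal.ofReal q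
            ≤ (∑ f : Sym2 (Fin n) → Bool, wt p f * ind (¬ StarP C z f P₀))
              + ∑ f : Sym2 (Fin n) → Bool, wt p f * ind (StarP C z f P₀) :=
              add_le_add_right hqle _
          _ = 1 := by rw [add_comm]; exact hsplit
          _ = ENNReal.ofReal (1 - q) + ENNReal.ofReal q := by
              rw [add_comm, ofReal_add_ofReal_one hq0 hq1]
      have hfin : (∑ f : Sym2 (Fin n) → Bool, wt p f * ind (¬ StarP C z f P₀))
          ≤ ENNReal.ofReal (1 - q) :=
        (ENNReal.add_le_add_iff_right ENNReal.ofReal_ne_top).mp hstep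
      calc ∑ f : Sym2 (Fin n) → Bool, wt p f * ind (∀ P ∈ F.filter (fun P => z ∈ P),
            ¬ (StarP C z f P ∧ Sat C g (P.erase z)))
          ≤ ∑ f : Sym2 (Fin n) → Bool, wt p f * ind (¬ StarP C z f P₀) :=
            Finset.sum_le_sum (fun f _ => mul_le_mul_right (mono f) _)
        _ ≤ ENNReal.ofReal (1 - q) := hfin
  calc ∑ g : Sym2 (Fin n) → Bool, ∑ f : Sym2 (Fin n) → Bool,
        (wt p g * ind (∀ P ∈ F0, ¬ Sat C g P)) *
          (wt p f * ind (∀ P ∈ F.filter (fun P => z ∈ P),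
            ¬ (StarP C z f P ∧ Sat C g (P.erase z))))
      = ∑ g : Sym2 (Fin n) → Bool, (wt p g * ind (∀ P ∈ F0, ¬ Sat C g P)) *
          (∑ f : Sym2 (Fin n) → Bool, wt p f * ind (∀ P ∈ F.filter (fun P => z ∈ P),
            ¬ (StarP C z f P ∧ Sat C g (P.erase z)))) :=
        Finset.sum_congr rfl (fun g _ => (Finset.mul_sum _ _ _).symm)
    _ ≤ ∑ g : Sym2 (Fin n) → Bool, (wt p g * ind (∀ P ∈ F0, ¬ Sat C g P)) *
          (ENNReal.ofReal q * ind (∀ P ∈ F.filter (fun P => z ∈ P), ¬ Sat C g (P.erase z))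
            + ENNReal.ofReal (1 - q)) :=
        Finset.sum_le_sum (fun g _ => mul_le_mul_right (innerB g) _)
    _ = ENNReal.ofReal q * Afail p C (F0 ∪ F1) + ENNReal.ofReal (1 - q) * Afail p C F0 := by
        have expand : ∀ g : Sym2 (Fin n) → Bool,
            (wt p g * ind (∀ P ∈ F0, ¬ Sat C g P)) *
              (ENNReal.ofReal q * ind (∀ P ∈ F.filter (fun P => z ∈ P), ¬ Sat C g (P.erase z))
                + ENNReal.ofReal (1 - q))
            = ENNReal.ofReal q * (wt p g * ind (∀ P ∈ F0 ∪ F1, ¬ Sat C g P))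
              + ENNReal.ofReal (1 - q) * (wt p g * ind (∀ P ∈ F0, ¬ Sat C g P)) := by
          intro g
          have hind : ind (∀ P ∈ F0, ¬ Sat C g P) *
              ind (∀ P ∈ F.filter (fun P => z ∈ P), ¬ Sat C g (P.erase z))
              = ind (∀ P ∈ F0 ∪ F1, ¬ Sat C g P) := by
            rw [← ind_and]
            apply ind_iff
            rw [Finset.forall_mem_union]
            constructor
            · rintro ⟨h0, h1⟩
              refine ⟨h0, ?_⟩
              intro Q hQ
              obtain ⟨P, hPf, rfl⟩ := Finset.mem_image.mp hQ
              exact h1 P hPf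
            · rintro ⟨h0, h1⟩
              refine ⟨h0, ?_⟩
              intro P hPf
              exact h1 (P.erase z) (Finset.mem_image.mpr ⟨P, hPf, rfl⟩)
          calc (wt p g * ind (∀ P ∈ F0, ¬ Sat C g P)) *
              (ENNReal.ofReal q * ind (∀ P ∈ F.filter (fun P => z ∈ P), ¬ Sat C g (P.erase z))
                + ENNReal.ofReal (1 - q))
              = ENNReal.ofReal q * (wt p g * (ind (∀ P ∈ F0, ¬ Sat C g P) *
                  ind (∀ P ∈ F.filter (fun P => z ∈ P), ¬ Sat C g (P.erase z))))
                + ENNReal.ofReal (1 - q) * (wt p g * ind (∀ P ∈ F0, ¬ Sat C g P)) := by ring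
            _ = _ := by rw [hind]
        rw [Finset.sum_congr rfl (fun g _ => expand g)]
        rw [Finset.sum_add_distrib, ← Finset.mul_sum, ← Finset.mul_sum]
        rfl

lemma Afail_le_Bfail {p q : ℝ} (hp0 : 0 ≤ p) (hp1 : p ≤ 1) (hq0 : 0 ≤ q) (hq1 : q ≤ 1)
    (C : Finset (Fin n)) (T : Finset (Fin n)) :
    Disjoint T C → ∀ F : Finset (Finset (Fin n)), (∀ P ∈ F, P ⊆ T) →
      (∀ P ∈ F, ∀ w ∈ P, q ≤ p ^ ((P ∪ C).erase w).card) →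
      Afail p C F ≤ Bfail q F := by
  classical
  induction T using Finset.induction_on with
  | empty =>
    intro _ F hsub _
    by_cases hF : F = ∅
    · subst hF
      have hA : Afail p C (∅ : Finset (Finset (Fin n))) = 1 := by
        rw [Afail]
        rw [Finset.sum_congr rfl (fun G _ => by
          rw [ind_of (fun P hP => absurd hP (Finset.notMem_empty P)), mul_one])]
        exact sum_wt hp0 hp1
      have hB : Bfail q (∅ : Finset (Finset (Fin n))) = 1 := by
        rw [Bfail]
        rw [Finset.sum_congr rfl (fun W _ => by
          rw [ind_of (fun P hP => absurd hP (Finset.notMem_empty P)), mul_one])]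
        exact sum_wt hq0 hq1
      rw [hA, hB]
    · obtain ⟨P, hP⟩ := Finset.nonempty_iff_ne_empty.mpr hF
      have hPempty : P = ∅ := Finset.subset_empty.mp (hsub P hP)
      subst hPempty
      have hA : Afail p C F = 0 := by
        rw [Afail]
        rw [Finset.sum_congr rfl (fun G _ => by
          rw [ind_of_not (fun hall => hall ∅ hP
            (fun x hx => absurd hx (Finset.notMem_empty x))), mul_zero])]
        exact Finset.sum_const_zero
      rw [hA]
      exact zero_le
  | @insert z T' hz ih =>
    intro hD F hsub hexp
    have hzC : z ∉ C := Finset.disjoint_left.mp hD (Finset.mem_insert_self z T')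
    have hD' : Disjoint T' C :=
      Finset.disjoint_left.mpr (fun {x} hx => Finset.disjoint_left.mp hD (Finset.mem_insert_of_mem hx))
    set F0 := F.filter (fun P => z ∉ P) with hF0
    set F1 := (F.filter (fun P => z ∈ P)).image (fun P => P.erase z) with hF1
    have hsub0 : ∀ P ∈ F0, P ⊆ T' := by
      intro P hP x hx
      have hP' := Finset.mem_filter.mp hP
      rcases Finset.mem_insert.mp (hsub P hP'.1 hx) with rfl | hxT'
      · exact absurd hx hP'.2
      · exact hxT'
    have hsub1 : ∀ Q ∈ F1, Q ⊆ T' := by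
      intro Q hQ
      obtain ⟨P, hPf, rfl⟩ := Finset.mem_image.mp hQ
      intro x hx
      have hx' := Finset.mem_erase.mp hx
      rcases Finset.mem_insert.mp (hsub P (Finset.mem_filter.mp hPf).1 hx'.2) with rfl | hxT'
      · exact absurd rfl hx'.1
      · exact hxT'
    have hexp0 : ∀ P ∈ F0, ∀ w ∈ P, q ≤ p ^ ((P ∪ C).erase w).card :=
      fun P hP => hexp P (Finset.mem_filter.mp hP).1
    have hexp1 : ∀ Q ∈ F1, ∀ w ∈ Q, q ≤ p ^ ((Q ∪ C).erase w).card := by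
      intro Q hQ w hw
      obtain ⟨P, hPf, rfl⟩ := Finset.mem_image.mp hQ
      have hPF : P ∈ F := (Finset.mem_filter.mp hPf).1
      have hwP : w ∈ P := Finset.mem_of_mem_erase hw
      refine le_trans (hexp P hPF w hwP) ?_
      apply pow_le_pow_of_le_one hp0 hp1
      apply Finset.card_le_card
      intro x hx
      have hx' := Finset.mem_erase.mp hx
      refine Finset.mem_erase.mpr ⟨hx'.1, ?_⟩
      rcases Finset.mem_union.mp hx'.2 with h' | h'
      · exact Finset.mem_union.mpr (Or.inl (Finset.mem_of_mem_erase h'))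
      · exact Finset.mem_union.mpr (Or.inr h')
    have hunion_sub : ∀ P ∈ F0 ∪ F1, P ⊆ T' := by
      intro P hP
      rcases Finset.mem_union.mp hP with h' | h'
      exacts [hsub0 P h', hsub1 P h']
    have hunion_exp : ∀ P ∈ F0 ∪ F1, ∀ w ∈ P, q ≤ p ^ ((P ∪ C).erase w).card := by
      intro P hP
      rcases Finset.mem_union.mp hP with h' | h'
      exacts [hexp0 P h', hexp1 P h']
    calc Afail p C F
        ≤ ENNReal.ofReal q * Afail p C (F0 ∪ F1) + ENNReal.ofReal (1 - q) * Afail p C F0 :=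
          Afail_step hp0 hp1 hq0 hq1 C z hzC F (fun P hP hzP => hexp P hP z hzP)
      _ ≤ ENNReal.ofReal q * Bfail q (F0 ∪ F1) + ENNReal.ofReal (1 - q) * Bfail q F0 :=
          add_le_add (mul_le_mul_right (ih hD' _ hunion_sub hunion_exp) _)
            (mul_le_mul_right (ih hD' _ hsub0 hexp0) _)
      _ = Bfail q F := (Bfail_step hq0 hq1 z F).symm

lemma mem_cliqueEdges {A : Finset (Fin n)} {e : Sym2 (Fin n)} :
    e ∈ cliqueEdges A ↔ ∃ x ∈ A, ∃ y ∈ A, x ≠ y ∧ e = s(x, y) := by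
  unfold cliqueEdges
  rw [Finset.mem_image]
  constructor
  · rintro ⟨w, hw, rfl⟩
    rw [Finset.mem_filter, Finset.mem_product] at hw
    exact ⟨w.1, hw.1.1, w.2, hw.1.2, hw.2, rfl⟩
  · rintro ⟨x, hx, y, hy, hxy, rfl⟩
    refine ⟨(x, y), ?_, rfl⟩
    rw [Finset.mem_filter, Finset.mem_product]
    exact ⟨⟨hx, hy⟩, hxy⟩

lemma event_iff_sat {C S : Finset (Fin n)} (hCS : C ⊆ S) (G : Sym2 (Fin n) → Bool) :
    (∀ e ∈ cliqueEdges S, e ∈ cliqueEdges C ∨ G e = true) ↔ Sat C G (S \ C) := by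
  constructor
  · intro h x hx y hy hxy
    have hxS : x ∈ S := (Finset.mem_sdiff.mp hx).1
    have hxC : x ∉ C := (Finset.mem_sdiff.mp hx).2
    have hyS : y ∈ S := by
      rcases Finset.mem_union.mp hy with h' | h'
      · exact (Finset.mem_sdiff.mp h').1
      · exact hCS h'
    have he : s(x, y) ∈ cliqueEdges S := mem_cliqueEdges.mpr ⟨x, hxS, y, hyS, hxy, rfl⟩
    rcases h _ he with hc | hg
    · exfalso
      rcases mem_cliqueEdges.mp hc with ⟨a, ha, b, hb, _, habe⟩
      have hxab : x ∈ s(a, b) := by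
        rw [← habe]
        rw [Sym2.mem_iff]
        exact Or.inl rfl
      rcases Sym2.mem_iff.mp hxab with rfl | rfl
      · exact hxC ha
      · exact hxC hb
    · exact hg
  · intro h e he
    rcases mem_cliqueEdges.mp he with ⟨x, hx, y, hy, hxy, rfl⟩
    by_cases hxC : x ∈ C
    · by_cases hyC : y ∈ C
      · exact Or.inl (mem_cliqueEdges.mpr ⟨x, hxC, y, hyC, hxy, rfl⟩)
      · right
        have := h y (Finset.mem_sdiff.mpr ⟨hy, hyC⟩) x
          (Finset.mem_union.mpr (Or.inr hxC)) (Ne.symm hxy)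
        rwa [Sym2.eq_swap] at this
    · right
      refine h x (Finset.mem_sdiff.mpr ⟨hx, hxC⟩) y (Finset.mem_union.mpr ?_) hxy
      by_cases hyC : y ∈ C
      · exact Or.inr hyC
      · exact Or.inl (Finset.mem_sdiff.mpr ⟨hy, hyC⟩)

end Main

/-! ### The main theorem -/

/-- If an `ℓ`-uniform family `𝒮` is a `(p^ℓ, ε/ℓ²)`-robust sunflower, then it is a
`(p, ε)`-robust clique sunflower. -/
theorem stmt9 {n ℓ : ℕ} (hℓ : 1 ≤ ℓ) (p ε : ℝ) (hp0 : 0 ≤ p) (hp1 : p ≤ 1)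
    (𝒮 : Finset (Finset (Fin n))) (h𝒮 : 𝒮.Nonempty) (huni : ∀ S ∈ 𝒮, S.card = ℓ)
    (h : IsRobustSunflower 𝒮 (p ^ ℓ) (ε / ℓ ^ 2)) :
    IsRobustCliqueSunflower 𝒮 p ε := by
  classical
  set C := core 𝒮 with hCdef
  have hC : ∀ S ∈ 𝒮, C ⊆ S := by
    intro S hS
    have := Finset.inf_le (f := id) hS
    exact this
  set q := p ^ ℓ with hqdef
  have hq0 : 0 ≤ q := pow_nonneg hp0 ℓ
  have hq1 : q ≤ 1 := pow_le_one₀ hp0 hp1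
  unfold IsRobustSunflower at h
  unfold IsRobustCliqueSunflower
  rw [randFun_apply] at h
  rw [randFun_apply]
  have hvert : ∀ W : Fin n → Bool,
      ind (W ∈ {W : Fin n → Bool | ∃ S ∈ 𝒮, ∀ x ∈ S, x ∈ C ∨ W x = true})
        = ind (∃ S ∈ 𝒮, Cov W (S \ C)) := by
    intro W
    apply ind_iff
    rw [Set.mem_setOf_eq]
    constructor
    · rintro ⟨S, hS, hall⟩
      refine ⟨S, hS, fun x hx => ?_⟩
      have hx' := Finset.mem_sdiff.mp hx
      rcases hall x hx'.1 with hc | hw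
      · exact absurd hc hx'.2
      · exact hw
    · rintro ⟨S, hS, hcov⟩
      refine ⟨S, hS, fun x hx => ?_⟩
      by_cases hxC : x ∈ C
      · exact Or.inl hxC
      · exact Or.inr (hcov x (Finset.mem_sdiff.mpr ⟨hx, hxC⟩))
  have hgraph : ∀ G : Sym2 (Fin n) → Bool,
      ind (G ∈ {G : Sym2 (Fin n) → Bool |
          ∃ S ∈ 𝒮, ∀ e ∈ cliqueEdges S, e ∈ cliqueEdges C ∨ G e = true})
        = ind (∃ S ∈ 𝒮, Sat C G (S \ C)) := by
    intro G
    apply ind_iff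
    rw [Set.mem_setOf_eq]
    exact exists_congr (fun S => and_congr_right (fun hS => event_iff_sat (hC S hS) G))
  simp only [← hCdef, hvert] at h
  simp only [← hCdef, hgraph]
  set Pfam := 𝒮.image (fun S => S \ C) with hPfam
  set Asucc := ∑ G : Sym2 (Fin n) → Bool, wt p G * ind (∃ S ∈ 𝒮, Sat C G (S \ C)) with hAsucc
  set Bsucc := ∑ W : Fin n → Bool, wt q W * ind (∃ S ∈ 𝒮, Cov W (S \ C)) with hBsucc
  have hiffG : ∀ G : Sym2 (Fin n) → Bool,
      (∀ P ∈ Pfam, ¬ Sat C G P) ↔ ¬ (∃ S ∈ 𝒮, Sat C G (S \ C)) := by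
    intro G
    constructor
    · rintro hall ⟨S, hS, hsat⟩
      exact hall (S \ C) (Finset.mem_image.mpr ⟨S, hS, rfl⟩) hsat
    · intro hne P hP hsat
      obtain ⟨S, hS, rfl⟩ := Finset.mem_image.mp hP
      exact hne ⟨S, hS, hsat⟩
  have hiffW : ∀ W : Fin n → Bool,
      (∀ P ∈ Pfam, ¬ Cov W P) ↔ ¬ (∃ S ∈ 𝒮, Cov W (S \ C)) := by
    intro W
    constructor
    · rintro hall ⟨S, hS, hcov⟩
      exact hall (S \ C) (Finset.mem_image.mpr ⟨S, hS, rfl⟩) hcov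
    · intro hne P hP hcov
      obtain ⟨S, hS, rfl⟩ := Finset.mem_image.mp hP
      exact hne ⟨S, hS, hcov⟩
  have hcomplG : Asucc + Afail p C Pfam = 1 := by
    rw [hAsucc, Afail, ← Finset.sum_add_distrib]
    rw [Finset.sum_congr rfl (fun G _ => by
      rw [ind_iff (hiffG G), ← mul_add, ind_add_ind_not, mul_one])]
    exact sum_wt hp0 hp1
  have hcomplW : Bsucc + Bfail q Pfam = 1 := by
    rw [hBsucc, Bfail, ← Finset.sum_add_distrib]
    rw [Finset.sum_congr rfl (fun W _ => by
      rw [ind_iff (hiffW W), ← mul_add, ind_add_ind_not, mul_one])]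
    exact sum_wt hq0 hq1
  have hmain : Afail p C Pfam ≤ Bfail q Pfam := by
    refine Afail_le_Bfail hp0 hp1 hq0 hq1 C (Finset.univ \ C) Finset.sdiff_disjoint Pfam ?_ ?_
    · intro P hP
      obtain ⟨S, hS, rfl⟩ := Finset.mem_image.mp hP
      exact Finset.sdiff_subset_sdiff (Finset.subset_univ S) (le_refl C)
    · intro P hP w hw
      obtain ⟨S, hS, rfl⟩ := Finset.mem_image.mp hP
      have hSC : S \ C ∪ C = S := by
        rw [Finset.sdiff_union_self_eq_union, Finset.union_eq_left.mpr (hC S hS)]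
      rw [hSC]
      have hwS : w ∈ S := (Finset.mem_sdiff.mp hw).1
      rw [Finset.card_erase_of_mem hwS, huni S hS]
      exact pow_le_pow_of_le_one hp0 hp1 (Nat.sub_le ℓ 1)
  have hBle : Bsucc ≤ Asucc := by
    have hAfin : Afail p C Pfam ≠ ⊤ := by
      intro htop
      rw [htop] at hcomplG
      simp at hcomplG
    have hchain : Bsucc + Afail p C Pfam ≤ Asucc + Afail p C Pfam := by
      calc Bsucc + Afail p C Pfam ≤ Bsucc + Bfail q Pfam := add_le_add_right hmain _
        _ = 1 := hcomplW
        _ = Asucc + Afail p C Pfam := hcomplG.symm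
    exact (ENNReal.add_le_add_iff_right hAfin).mp hchain
  have hBsucc1 : Bsucc ≤ 1 := by
    rw [← hcomplW]
    exact self_le_add_right _ _
  have hl1 : (1:ℝ) ≤ (ℓ:ℝ) := by exact_mod_cast hℓ
  have hl2 : (1:ℝ) ≤ (ℓ:ℝ) ^ 2 := by nlinarith
  have hε0 : 0 ≤ ε := by
    by_contra hneg
    push_neg at hneg
    have h1 : ENNReal.ofReal (1 - ε / (ℓ:ℝ) ^ 2) ≤ 1 := le_trans h hBsucc1
    rw [ENNReal.ofReal_le_one] at h1
    have hdivneg : ε / (ℓ:ℝ) ^ 2 < 0 := div_neg_of_neg_of_pos hneg (by linarith)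
    linarith
  have hdiv : ε / (ℓ:ℝ) ^ 2 ≤ ε := div_le_self hε0 hl2
  calc ENNReal.ofReal (1 - ε) ≤ ENNReal.ofReal (1 - ε / (ℓ:ℝ) ^ 2) :=
        ENNReal.ofReal_le_ofReal (by linarith)
    _ ≤ Bsucc := h
    _ ≤ Asucc := hBle
end
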